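/- Let m be an odd natural number. Then i^{−m} · 8^{−1/2} · e^{iπm/4} · ∑_{x ∈ {1,−1,i,−i}} x^{−m} · e^{2πi·tr(x/(4+4i))} equals e^{iπ(1−m)/4} if m ≡ 1 mod 4 and equals e^{iπ(3−m)/4} if m ≡ 3 mod 4. In particular this quantity equals 1 if m ≡ 1 or 3 mod 8, and equals −1 if m ≡ 5 or 7 mod 8. -/

import Mathlib

/-- The trace of a complex number: `tr z = z + conj z`. -/
noncomputable def ctr (z : ℂ) : ℂ := z + (starRingEnd ℂ) z

/-- The Gauss-sum expression for the sign `W(ξ_m)` of the functional equation of the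
Hecke `L`-function attached to the character `ξ_m` of conductor `(2+2i)`. -/
noncomputable def Wxi (m : ℕ) : ℂ :=
  Complex.I ^ (-(m : ℤ)) * (((8 : ℝ) ^ (-(1/2 : ℝ)) : ℝ) : ℂ) *
    Complex.exp (Real.pi * Complex.I * m / 4) *
    ∑ x ∈ ({1, -1, Complex.I, -Complex.I} : Finset ℂ),
      x ^ (-(m : ℤ)) * Complex.exp (2 * Real.pi * Complex.I * ctr (x / (4 + 4 * Complex.I)))

lemma exp_two_pi_quarter : Complex.exp (2*(Real.pi:ℂ)*Complex.I*(1/4)) = Complex.I := by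
  rw [show 2*(Real.pi:ℂ)*Complex.I*(1/4) = (Real.pi:ℂ)/2 * Complex.I by ring, Complex.exp_mul_I]
  norm_num [← Complex.ofReal_ofNat, ← Complex.ofReal_div, ← Complex.ofReal_cos, ← Complex.ofReal_sin]

lemma exp_two_pi_neg_quarter : Complex.exp (2*(Real.pi:ℂ)*Complex.I*(-(1/4))) = -Complex.I := by
  rw [show 2*(Real.pi:ℂ)*Complex.I*(-(1/4)) = -((Real.pi:ℂ)/2 * Complex.I) by ring,
    Complex.exp_neg, show (Real.pi:ℂ)/2 * Complex.I = 2*(Real.pi:ℂ)*Complex.I*(1/4) by ring,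
    exp_two_pi_quarter, Complex.inv_I]

lemma sum_eval (m : ℕ) (hm : Odd m) :
    ∑ x ∈ ({1, -1, Complex.I, -Complex.I} : Finset ℂ),
      x ^ (-(m : ℤ)) * Complex.exp (2 * Real.pi * Complex.I * ctr (x / (4 + 4 * Complex.I)))
    = 2*Complex.I + 2*Complex.I * Complex.I ^ (-(m:ℤ)) := by
  have h1 : (1:ℂ) ∉ ({-1, Complex.I, -Complex.I} : Finset ℂ) := by
    norm_num [Complex.ext_iff]
  have h2 : (-1:ℂ) ∉ ({Complex.I, -Complex.I} : Finset ℂ) := by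
    norm_num [Complex.ext_iff]
  have h3 : (Complex.I) ∉ ({-Complex.I} : Finset ℂ) := by
    norm_num [Complex.ext_iff]
  rw [Finset.sum_insert h1, Finset.sum_insert h2, Finset.sum_insert h3, Finset.sum_singleton]
  have c1 : ctr (1/(4+4*Complex.I)) = 1/4 := by
    simp [ctr, Complex.ext_iff, Complex.div_re, Complex.div_im, Complex.normSq]; norm_num
  have c2 : ctr ((-1)/(4+4*Complex.I)) = -(1/4) := by
    simp [ctr, Complex.ext_iff, Complex.div_re, Complex.div_im, Complex.normSq]; norm_num
  have c3 : ctr (Complex.I/(4+4*Complex.I)) = 1/4 := by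
    simp [ctr, Complex.ext_iff, Complex.div_re, Complex.div_im, Complex.normSq]; norm_num
  have c4 : ctr ((-Complex.I)/(4+4*Complex.I)) = -(1/4) := by
    simp [ctr, Complex.ext_iff, Complex.div_re, Complex.div_im, Complex.normSq]; norm_num
  rw [c1, c2, c3, c4, exp_two_pi_quarter, exp_two_pi_neg_quarter]
  have hneg1 : (-1:ℂ) ^ (-(m:ℤ)) = -1 := by
    rw [zpow_neg, zpow_natCast, hm.neg_one_pow, inv_neg, inv_one]
  have hnegI : (-Complex.I) ^ (-(m:ℤ)) = -(Complex.I ^ (-(m:ℤ))) := by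
    rw [show -Complex.I = (-1) * Complex.I by ring, mul_zpow, hneg1, neg_one_mul]
  rw [hneg1, hnegI, one_zpow]
  ring

lemma hc8 : ((8:ℝ) ^ (-(1/2:ℝ)) : ℝ) = (2 * Real.sqrt 2)⁻¹ := by
  rw [Real.rpow_neg (by norm_num), ← Real.sqrt_eq_rpow,
    show (8:ℝ) = 2^2 * 2 by norm_num, Real.sqrt_mul (by positivity), Real.sqrt_sq (by norm_num)]

lemma exp_pi_quarter : Complex.exp ((Real.pi:ℂ) * Complex.I / 4) =
    ((Real.sqrt 2 / 2 : ℝ) : ℂ) + ((Real.sqrt 2 / 2 : ℝ) : ℂ) * Complex.I := by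
  rw [show (Real.pi:ℂ) * Complex.I / 4 = (((Real.pi/4 : ℝ)):ℂ) * Complex.I by push_cast; ring,
    Complex.exp_mul_I, ← Complex.ofReal_cos, ← Complex.ofReal_sin,
    Real.cos_pi_div_four, Real.sin_pi_div_four]

lemma Wxi_one (k : ℕ) : Wxi (4*k+1) = (-1)^k := by
  have hodd : Odd (4*k+1) := ⟨2*k, by ring⟩
  rw [Wxi, sum_eval _ hodd]
  have hz : Complex.I ^ (-((4*k+1:ℕ):ℤ)) = -Complex.I := by
    rw [zpow_neg, zpow_natCast, pow_succ, pow_mul, Complex.I_pow_four, one_pow, one_mul,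
      Complex.inv_I]
  have he : Complex.exp ((Real.pi:ℂ) * Complex.I * ((4*k+1:ℕ):ℂ) / 4)
      = (-1)^k * Complex.exp ((Real.pi:ℂ) * Complex.I / 4) := by
    rw [show (Real.pi:ℂ) * Complex.I * ((4*k+1:ℕ):ℂ) / 4
        = (k:ℂ) * ((Real.pi:ℂ)*Complex.I) + (Real.pi:ℂ)*Complex.I/4 by push_cast; ring,
      Complex.exp_add, Complex.exp_nat_mul, Complex.exp_pi_mul_I]
  rw [hz, he, exp_pi_quarter, hc8]
  have hs : ((Real.sqrt 2 : ℝ) : ℂ) * ((Real.sqrt 2 : ℝ) : ℂ) = 2 := by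
    rw [← Complex.ofReal_mul, Real.mul_self_sqrt (by norm_num)]; norm_num
  have hsne : ((Real.sqrt 2 : ℝ) : ℂ) ≠ 0 := by
    simp [Real.sqrt_eq_zero']
  push_cast
  field_simp
  ring_nf
  linear_combination (Complex.I^2-2) * Complex.I_sq

lemma Wxi_three (k : ℕ) : Wxi (4*k+3) = (-1)^k := by
  have hodd : Odd (4*k+3) := ⟨2*k+1, by ring⟩
  rw [Wxi, sum_eval _ hodd]
  have hz : Complex.I ^ (-((4*k+3:ℕ):ℤ)) = Complex.I := by
    rw [zpow_neg, zpow_natCast, show 4*k+3 = 4*k+2+1 from rfl, pow_succ, pow_add, pow_mul,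
      Complex.I_pow_four, one_pow, one_mul, Complex.I_sq]
    rw [show (-1:ℂ) * Complex.I = -Complex.I by ring, inv_neg, Complex.inv_I, neg_neg]
  have he : Complex.exp ((Real.pi:ℂ) * Complex.I * ((4*k+3:ℕ):ℂ) / 4)
      = (-1)^k * Complex.I * Complex.exp ((Real.pi:ℂ) * Complex.I / 4) := by
    rw [show (Real.pi:ℂ) * Complex.I * ((4*k+3:ℕ):ℂ) / 4
        = ((k:ℂ) * ((Real.pi:ℂ)*Complex.I) + 2*(Real.pi:ℂ)*Complex.I*(1/4)) + (Real.pi:ℂ)*Complex.I/4 by push_cast; ring,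
      Complex.exp_add, Complex.exp_add, Complex.exp_nat_mul, Complex.exp_pi_mul_I,
      exp_two_pi_quarter]
  rw [hz, he, exp_pi_quarter, hc8]
  have hs : ((Real.sqrt 2 : ℝ) : ℂ) * ((Real.sqrt 2 : ℝ) : ℂ) = 2 := by
    rw [← Complex.ofReal_mul, Real.mul_self_sqrt (by norm_num)]; norm_num
  have hsne : ((Real.sqrt 2 : ℝ) : ℂ) ≠ 0 := by
    simp [Real.sqrt_eq_zero']
  push_cast
  field_simp
  ring_nf
  linear_combination (Complex.I^3 + 2*Complex.I^2 - 2) * Complex.I_sq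

lemma E_one (k : ℕ) : Complex.exp ((Real.pi:ℂ) * Complex.I * (1 - ((4*k+1:ℕ):ℂ)) / 4) = (-1)^k := by
  rw [show (Real.pi:ℂ) * Complex.I * (1 - ((4*k+1:ℕ):ℂ)) / 4
      = -((k:ℂ) * ((Real.pi:ℂ)*Complex.I)) by push_cast; ring,
    Complex.exp_neg, Complex.exp_nat_mul, Complex.exp_pi_mul_I, ← inv_pow, inv_neg, inv_one]

lemma E_three (k : ℕ) : Complex.exp ((Real.pi:ℂ) * Complex.I * (3 - ((4*k+3:ℕ):ℂ)) / 4) = (-1)^k := by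
  rw [show (Real.pi:ℂ) * Complex.I * (3 - ((4*k+3:ℕ):ℂ)) / 4
      = -((k:ℂ) * ((Real.pi:ℂ)*Complex.I)) by push_cast; ring,
    Complex.exp_neg, Complex.exp_nat_mul, Complex.exp_pi_mul_I, ← inv_pow, inv_neg, inv_one]

theorem sign_functional_equation_xi (m : ℕ) (hm : Odd m) :
    (m % 4 = 1 → Wxi m = Complex.exp (Real.pi * Complex.I * (1 - (m : ℂ)) / 4)) ∧
    (m % 4 = 3 → Wxi m = Complex.exp (Real.pi * Complex.I * (3 - (m : ℂ)) / 4)) ∧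
    (m % 8 = 1 ∨ m % 8 = 3 → Wxi m = 1) ∧
    (m % 8 = 5 ∨ m % 8 = 7 → Wxi m = -1) := by
  refine ⟨?_, ?_, ?_, ?_⟩
  · intro h
    obtain ⟨k, rfl⟩ : ∃ k, m = 4*k+1 := ⟨m/4, by omega⟩
    rw [Wxi_one, E_one]
  · intro h
    obtain ⟨k, rfl⟩ : ∃ k, m = 4*k+3 := ⟨m/4, by omega⟩
    rw [Wxi_three, E_three]
  · rintro (h | h)
    · obtain ⟨j, rfl⟩ : ∃ j, m = 4*(2*j)+1 := ⟨m/8, by omega⟩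
      rw [Wxi_one]; simp [pow_mul]
    · obtain ⟨j, rfl⟩ : ∃ j, m = 4*(2*j)+3 := ⟨m/8, by omega⟩
      rw [Wxi_three]; simp [pow_mul]
  · rintro (h | h)
    · obtain ⟨j, rfl⟩ : ∃ j, m = 4*(2*j+1)+1 := ⟨m/8, by omega⟩
      rw [Wxi_one]; simp [pow_succ, pow_mul]
    · obtain ⟨j, rfl⟩ : ∃ j, m = 4*(2*j+1)+3 := ⟨m/8, by omega⟩
      rw [Wxi_three]; simp [pow_succ, pow_mul]
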